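/- (Forney's formula) Let σ(z) = s_0 + s_1 z + ... + s_{r−1} z^{r−1}, L̃(z) = ∏_{k=1}^l (1 − η_k z), and E(z) = L̃(z)σ(z) mod z^r, with 2l ≤ r. Then for each error position m = m_k, the error value is e_m = −α_m E(1/α_m) / (h_m L̃'(1/α_m)). -/

import Mathlib

open Polynomial Finset in
lemma my_derivative_prod {F : Type*} [CommRing F] {ι : Type*} [DecidableEq ι]
    (s : Finset ι) (f : ι → F[X]) :
    derivative (∏ i ∈ s, f i) = ∑ i ∈ s, (∏ j ∈ s.erase i, f j) * derivative (f i) := by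
  induction s using Finset.induction with
  | empty => simp
  | insert a s ha ih =>
    have h1 : ∀ i ∈ s, (∏ j ∈ (insert a s).erase i, f j) * derivative (f i)
        = f a * ((∏ j ∈ s.erase i, f j) * derivative (f i)) := by
      intro i hi
      rw [Finset.erase_insert_of_ne (by rintro rfl; exact ha hi),
        Finset.prod_insert (fun h => ha (Finset.mem_of_mem_erase h)), mul_assoc]
    rw [Finset.prod_insert ha, derivative_mul, ih, Finset.sum_insert ha,
      Finset.erase_insert ha, Finset.sum_congr rfl h1, ← Finset.mul_sum,
      mul_comm (derivative (f a))]


open Polynomial in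
/-- Forney's formula: with `σ(z) = Σ_{j<r} s_j z^j`, `L̃(z) = ∏ (1 - η_k z)` and
`E(z) = L̃(z)σ(z) mod z^r` (`2l ≤ r`), the error value at position `m = m_k` is
`e_m = -α_m E(1/α_m) / (h_m L̃'(1/α_m))`. -/
theorem stmt_14 {F : Type*} [Field F] (l r : ℕ) (hlr : 2 * l ≤ r)
    (η hm em : Fin l → F) (hη0 : ∀ k, η k ≠ 0) (hηinj : Function.Injective η)
    (hhm : ∀ k, hm k ≠ 0) (hem : ∀ k, em k ≠ 0)
    (s : ℕ → F) (hs : ∀ j, s j = ∑ k, hm k * em k * η k ^ j) :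
    ∀ k : Fin l,
      em k = -(η k *
          (((∏ i, (1 - C (η i) * X)) * (∑ j ∈ Finset.range r, C (s j) * X ^ j)) %ₘ
            (X ^ r : F[X])).eval (η k)⁻¹) /
        (hm k * (Polynomial.derivative (∏ i, (1 - C (η i) * X))).eval (η k)⁻¹) := by
  intro k
  have hl : 0 < l := k.pos
  set L : F[X] := ∏ i, (1 - C (η i) * X) with hL
  set Lk : Fin l → F[X] := fun i => ∏ j ∈ Finset.univ.erase i, (1 - C (η j) * X) with hLkdef
  have hfac : ∀ i : Fin l, L = (1 - C (η i) * X) * Lk i :=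
    fun i => (Finset.mul_prod_erase Finset.univ _ (Finset.mem_univ i)).symm
  -- key polynomial identity
  have key : L * (∑ j ∈ Finset.range r, C (s j) * X ^ j)
      = (∑ i, C (hm i * em i) * Lk i)
        + (-(∑ i, C (hm i * em i * η i ^ r) * Lk i)) * X ^ r := by
    have h1 : ∑ j ∈ Finset.range r, C (s j) * X ^ j
        = ∑ i, C (hm i * em i) * ∑ j ∈ Finset.range r, (C (η i) * X) ^ j := by
      have : ∀ j ∈ Finset.range r, C (s j) * X ^ j
          = ∑ i, C (hm i * em i) * (C (η i) * X) ^ j := by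
        intro j _
        rw [hs j, map_sum, Finset.sum_mul]
        refine Finset.sum_congr rfl fun i _ => ?_
        rw [mul_pow, ← C_pow, map_mul, mul_assoc]
      rw [Finset.sum_congr rfl this, Finset.sum_comm]
      exact Finset.sum_congr rfl fun i _ => (Finset.mul_sum _ _ _).symm
    rw [h1, Finset.mul_sum]
    have h2 : ∀ i : Fin l, L * (C (hm i * em i) * ∑ j ∈ Finset.range r, (C (η i) * X) ^ j)
        = C (hm i * em i) * Lk i - C (hm i * em i * η i ^ r) * Lk i * X ^ r := by
      intro i
      have hg := geom_sum_mul (C (η i) * X) r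
      have hx : C (η i) ^ r * X ^ r = (C (η i) * X) ^ r := (mul_pow _ _ _).symm
      rw [hfac i]
      simp only [map_mul, map_pow]
      linear_combination (-(C (hm i) * C (em i) * Lk i)) * hg
        + (C (hm i) * C (em i) * Lk i) * hx
    rw [Finset.sum_congr rfl fun i _ => h2 i, Finset.sum_sub_distrib, neg_mul,
      Finset.sum_mul, sub_eq_add_neg]
  -- degree bound
  have hdeg1 : ∀ j : Fin l, (1 - C (η j) * X).degree ≤ 1 := by
    intro j
    refine le_trans (degree_sub_le _ _) (max_le (le_trans degree_one_le (by norm_num)) ?_)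
    calc (C (η j) * X).degree ≤ (C (η j)).degree + (X : F[X]).degree := degree_mul_le _ _
      _ ≤ 0 + 1 := add_le_add degree_C_le degree_X_le
      _ = 1 := by norm_num
  have hdegLk : ∀ i : Fin l, (Lk i).degree < (r : ℕ) := by
    intro i
    have h1 : (Lk i).degree ≤ ∑ j ∈ Finset.univ.erase i, (1 - C (η j) * X).degree :=
      Polynomial.degree_prod_le _ _
    have h2 : ∑ j ∈ Finset.univ.erase i, (1 - C (η j) * X).degree
        ≤ ∑ _j ∈ Finset.univ.erase i, (1 : WithBot ℕ) :=
      Finset.sum_le_sum fun j _ => hdeg1 j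
    have h3 : ∑ _j ∈ Finset.univ.erase i, (1 : WithBot ℕ) = ((l - 1 : ℕ) : WithBot ℕ) := by
      rw [Finset.sum_const, Finset.card_erase_of_mem (Finset.mem_univ i), Finset.card_univ,
        Fintype.card_fin]
      simp [nsmul_eq_mul]
    have hlt : l - 1 < r :=
      lt_of_lt_of_le (Nat.sub_lt hl one_pos)
        (le_trans (Nat.le_mul_of_pos_left l two_pos) hlr)
    have h4 : ((l - 1 : ℕ) : WithBot ℕ) < (r : ℕ) := by exact_mod_cast hlt
    exact lt_of_le_of_lt (le_trans h1 (le_trans h2 (le_of_eq h3))) h4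
  have hE : (L * (∑ j ∈ Finset.range r, C (s j) * X ^ j)) %ₘ (X ^ r : F[X])
      = ∑ i, C (hm i * em i) * Lk i := by
    rw [key, Polynomial.add_modByMonic]
    have h0 : ((-(∑ i, C (hm i * em i * η i ^ r) * Lk i)) * X ^ r) %ₘ (X ^ r : F[X]) = 0 := by
      rw [mul_comm]
      exact Polynomial.self_mul_modByMonic (monic_X_pow r)
    rw [h0, add_zero, (Polynomial.modByMonic_eq_self_iff (monic_X_pow r)).2]
    refine lt_of_le_of_lt (Polynomial.degree_sum_le _ _) ?_
    rw [degree_X_pow]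
    refine Finset.sup_lt_iff (by exact_mod_cast WithBot.bot_lt_coe r) |>.2 fun i _ => ?_
    calc (C (hm i * em i) * Lk i).degree ≤ 0 + (Lk i).degree := by
          exact le_trans (degree_mul_le _ _) (add_le_add degree_C_le le_rfl)
      _ < r := by rw [zero_add]; exact hdegLk i
  set c : F := ∏ j ∈ Finset.univ.erase k, (1 - η j * (η k)⁻¹) with hc_def
  have hLkeval : (Lk k).eval (η k)⁻¹ = c := by
    simp [hLkdef, eval_prod, hc_def]
  have hLkzero : ∀ i : Fin l, i ≠ k → (Lk i).eval (η k)⁻¹ = 0 := by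
    intro i hik
    simp only [hLkdef, eval_prod, eval_sub, eval_one, eval_mul, eval_C, eval_X]
    refine Finset.prod_eq_zero (Finset.mem_erase.2 ⟨Ne.symm hik, Finset.mem_univ k⟩) ?_
    rw [mul_inv_cancel₀ (hη0 k), sub_self]
  have hc : c ≠ 0 := by
    rw [hc_def]
    refine Finset.prod_ne_zero_iff.2 fun j hj => ?_
    intro h
    have h1 : η j * (η k)⁻¹ = 1 := by rwa [sub_eq_zero, eq_comm] at h
    have : η j = η k := by
      have h2 : η j * (η k)⁻¹ * η k = 1 * η k := by rw [h1]
      rwa [mul_assoc, inv_mul_cancel₀ (hη0 k), mul_one, one_mul] at h2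
    exact (Finset.mem_erase.1 hj).1 (hηinj this)
  have hEeval : ((L * (∑ j ∈ Finset.range r, C (s j) * X ^ j)) %ₘ (X ^ r : F[X])).eval (η k)⁻¹
      = hm k * em k * c := by
    rw [hE]
    rw [Polynomial.eval_finset_sum]
    rw [Finset.sum_eq_single k (fun i _ hik => by rw [eval_mul, hLkzero i hik, mul_zero])
      (fun h => absurd (Finset.mem_univ k) h)]
    rw [eval_mul, eval_C, hLkeval]
  have hderiv : (Polynomial.derivative L).eval (η k)⁻¹ = c * (-(η k)) := by
    rw [hL, my_derivative_prod]
    rw [Polynomial.eval_finset_sum]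
    rw [Finset.sum_eq_single k (fun i _ hik => by
        rw [eval_mul, show (∏ j ∈ Finset.univ.erase i, (1 - C (η j) * X)) = Lk i from rfl,
          hLkzero i hik, zero_mul])
      (fun h => absurd (Finset.mem_univ k) h)]
    rw [eval_mul, show (∏ j ∈ Finset.univ.erase k, (1 - C (η j) * X)) = Lk k from rfl, hLkeval]
    congr 1
    simp
  rw [hEeval, hderiv]
  rw [eq_div_iff (mul_ne_zero (hhm k) (mul_ne_zero hc (neg_ne_zero.2 (hη0 k))))]
  ring
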